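/- arXiv:2602.20706 — 2 statements merged into one kernel-verified Lean document; each statement's English description precedes it below -/
import Mathlib

section
/- Let n be a positive integer, 0 ≤ τ < 1, and 0 ≤ β ≤ 1. Suppose x : {1,...,n} → ℝ satisfies 0 ≤ x_t ≤ 1 for all t and, for every t ∈ {1,...,n}, 1 - x_t ≤ β·τ + ((1-τ)/n)·∑_{s=1}^{t} x_s. Then for every t ∈ {1,...,n}, ∑_{s=1}^{t} x_s ≥ (1 - β·τ)·∑_{s=1}^{t} (1 - (1-τ)/(n+1-τ))^s. -/
open Finset

theorem stmt_0 (n : ℕ) (hn : 0 < n) (τ β : ℝ)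
    (hτ0 : 0 ≤ τ) (hτ1 : τ < 1) (hβ0 : 0 ≤ β) (hβ1 : β ≤ 1)
    (x : ℕ → ℝ)
    (hx : ∀ t ∈ Finset.Icc 1 n, 0 ≤ x t ∧ x t ≤ 1)
    (hrec : ∀ t ∈ Finset.Icc 1 n,
      1 - x t ≤ β * τ + (1 - τ) / n * ∑ s ∈ Finset.Icc 1 t, x s) :
    ∀ t ∈ Finset.Icc 1 n,
      ∑ s ∈ Finset.Icc 1 t, x s ≥
        (1 - β * τ) * ∑ s ∈ Finset.Icc 1 t, (1 - (1 - τ) / (n + 1 - τ)) ^ s := by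
  have hn' : (0:ℝ) < n := by exact_mod_cast hn
  have hd : (0:ℝ) < (n:ℝ) + 1 - τ := by linarith
  set r : ℝ := 1 - (1 - τ) / ((n:ℝ) + 1 - τ) with hrdef
  have hrn : r = (n:ℝ) / ((n:ℝ) + 1 - τ) := by
    rw [hrdef]; field_simp; ring
  have hr0 : 0 ≤ r := by
    rw [hrn]; positivity
  have hβτ : β * τ ≤ 1 := by nlinarith
  -- geometric sum identity
  have h1 : ∀ m : ℕ, ∑ s ∈ Finset.Icc 1 m, r ^ s = r * ∑ i ∈ Finset.range m, r ^ i := by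
    intro m
    rw [← Finset.Ico_add_one_right_eq_Icc, Finset.sum_Ico_eq_sum_range, Finset.mul_sum]
    refine Finset.sum_congr rfl fun i _ => ?_
    rw [pow_add, pow_one]
  have geom : ∀ t : ℕ, ∑ s ∈ Finset.Icc 1 (t+1), r ^ s
      = r * (1 + ∑ s ∈ Finset.Icc 1 t, r ^ s) := by
    intro t
    rw [h1, h1, Finset.sum_range_succ']
    simp only [pow_zero, pow_succ]
    rw [← Finset.sum_mul]
    ring
  have key : ∀ t : ℕ, t ≤ n → ∑ s ∈ Finset.Icc 1 t, x s
      ≥ (1 - β * τ) * ∑ s ∈ Finset.Icc 1 t, r ^ s := by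
    intro t
    induction t with
    | zero => intro _; simp
    | succ t ih =>
      intro hle
      have ih' := ih (Nat.le_of_succ_le hle)
      have hmem : t + 1 ∈ Finset.Icc 1 n := by
        simp only [Finset.mem_Icc]; omega
      have hrec' := hrec (t+1) hmem
      rw [Finset.sum_Icc_succ_top (by omega : 1 ≤ t + 1)] at hrec'
      rw [Finset.sum_Icc_succ_top (by omega : 1 ≤ t + 1), geom]
      set S := ∑ s ∈ Finset.Icc 1 t, x s with hS
      set T := ∑ s ∈ Finset.Icc 1 t, r ^ s with hT
      -- hrec' : 1 - x (t+1) ≤ β*τ + (1-τ)/n * (S + x (t+1))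
      have e : (1 - τ) / (n:ℝ) * (S + x (t+1)) * n = (1 - τ) * (S + x (t+1)) := by
        field_simp
      have hrec2 : (n:ℝ) * (1 - x (t+1) - β * τ) ≤ (1 - τ) * (S + x (t+1)) := by
        nlinarith [mul_le_mul_of_nonneg_right hrec' hn'.le]
      have step : r * (S + 1 - β * τ) ≤ S + x (t+1) := by
        rw [hrn, div_mul_eq_mul_div, div_le_iff₀ hd]
        nlinarith
      nlinarith [mul_le_mul_of_nonneg_left ih' hr0]
  intro t ht
  simp only [Finset.mem_Icc] at ht
  exact key t ht.2
end

section
/- Let 0 ≤ β·τ < 1. Define the function f(p) = H_p/(1 - β·τ) where H_p = ∑_{i=1}^{p} 1/i. Suppose a sequence (E_p)_{p≥1} of nonnegative reals satisfies E_1 ≤ 1/(1 - β·τ) and, for every p ≥ 2, (1 - β·τ)·E_p ≤ 1 + ((1 - β·τ)/p)·∑_{i=1}^{p-1} E_i. Then E_p ≤ H_p/(1 - β·τ) for all p ≥ 1. -/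
lemma harm_pos (p : ℕ) (hp : 1 ≤ p) : (1:ℝ) ≤ ∑ i ∈ Finset.Icc 1 p, (1:ℝ)/i := by
  calc (1:ℝ) = ∑ i ∈ Finset.Icc (1:ℕ) 1, (1:ℝ)/i := by simp
  _ ≤ _ := by
    apply Finset.sum_le_sum_of_subset_of_nonneg (Finset.Icc_subset_Icc le_rfl hp)
    intro i _ _
    positivity

lemma harm_sum_id (p : ℕ) (hp : 1 ≤ p) :
    ∑ i ∈ Finset.Icc 1 (p-1), (∑ j ∈ Finset.Icc 1 i, (1:ℝ)/j)
      = p * (∑ i ∈ Finset.Icc 1 p, (1:ℝ)/i) - p := by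
  induction p, hp using Nat.le_induction with
  | base => simp
  | succ n hn ih =>
    have h1 : (n + 1) - 1 = n := rfl
    rw [h1]
    have hstep : Finset.Icc 1 n = Finset.Icc 1 (n-1) ∪ {n} := by
      rcases Nat.exists_eq_add_of_le hn with ⟨k, rfl⟩
      ext x
      simp [Nat.lt_succ_iff, Nat.le_add_left]
      omega
    have hdisj : Disjoint (Finset.Icc 1 (n-1)) ({n} : Finset ℕ) := by
      simp
      omega
    have hstep2 : Finset.Icc 1 (n+1) = Finset.Icc 1 n ∪ {n+1} := by
      ext x; simp; omega
    have hdisj2 : Disjoint (Finset.Icc 1 n) ({n+1} : Finset ℕ) := by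
      simp
    rw [hstep, Finset.sum_union hdisj, ih]
    rw [show Finset.Icc 1 (n+1) = Finset.Icc 1 n ∪ {n+1} from hstep2,
        Finset.sum_union hdisj2]
    have hn0 : (n:ℝ) ≠ 0 := by positivity
    simp only [Finset.sum_singleton]
    push_cast
    field_simp
    ring

theorem stmt_5 (β τ : ℝ) (h0 : 0 ≤ β * τ) (h1 : β * τ < 1)
    (E : ℕ → ℝ) (hEnn : ∀ p, 1 ≤ p → 0 ≤ E p)
    (hE1 : E 1 ≤ 1 / (1 - β * τ))
    (hrec : ∀ p, 2 ≤ p →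
      (1 - β * τ) * E p ≤ 1 + (1 - β * τ) / p * ∑ i ∈ Finset.Icc 1 (p - 1), E i) :
    ∀ p, 1 ≤ p → E p ≤ (∑ i ∈ Finset.Icc 1 p, (1 : ℝ) / i) / (1 - β * τ) := by
  have hc : (0:ℝ) < 1 - β * τ := by linarith
  intro p
  induction p using Nat.strong_induction_on with
  | _ p ih =>
    intro hp
    rcases eq_or_lt_of_le hp with h | h
    · rw [← h]
      simpa using hE1
    · have h2 : 2 ≤ p := h
      have key := hrec p h2
      have hsum : ∑ i ∈ Finset.Icc 1 (p-1), E i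
          ≤ ∑ i ∈ Finset.Icc 1 (p-1), (∑ j ∈ Finset.Icc 1 i, (1:ℝ)/j) / (1 - β*τ) := by
        apply Finset.sum_le_sum
        intro i hi
        simp only [Finset.mem_Icc] at hi
        exact ih i (by omega) hi.1
      have hid := harm_sum_id p hp
      have hsum' : ∑ i ∈ Finset.Icc 1 (p-1), (∑ j ∈ Finset.Icc 1 i, (1:ℝ)/j) / (1 - β*τ)
          = (p * (∑ i ∈ Finset.Icc 1 p, (1:ℝ)/i) - p) / (1 - β*τ) := by
        rw [← Finset.sum_div, hid]
      have hp0 : (0:ℝ) < p := by positivity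
      have hcE : (1 - β * τ) * E p ≤ ∑ i ∈ Finset.Icc 1 p, (1:ℝ)/i := by
        calc (1 - β * τ) * E p
            ≤ 1 + (1 - β * τ) / p * ∑ i ∈ Finset.Icc 1 (p-1), E i := key
          _ ≤ 1 + (1 - β * τ) / p * ((p * (∑ i ∈ Finset.Icc 1 p, (1:ℝ)/i) - p) / (1 - β*τ)) := by
              have : (0:ℝ) ≤ (1 - β * τ) / p := by positivity
              have := mul_le_mul_of_nonneg_left (hsum.trans (le_of_eq hsum')) this
              linarith
          _ = ∑ i ∈ Finset.Icc 1 p, (1:ℝ)/i := by field_simp; ring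
      rw [le_div_iff₀ hc, mul_comm]
      exact hcE
end
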